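/- Let Φ and Ψ be simply laced root systems with bases X and Y respectively, and suppose f : X → Y is a bijection preserving inner products (⟨f(x), f(x')⟩ = ⟨x, x'⟩ for all x, x' ∈ X). Then the linear map sending Σ αₓ x to Σ αₓ f(x) is a well-defined linear isometry of span(X) onto span(Y) mapping Φ onto Ψ. -/

import Mathlib

open RealInnerProductSpace

variable {E F : Type*} [NormedAddCommGroup E] [InnerProductSpace ℝ E]
  [NormedAddCommGroup F] [InnerProductSpace ℝ F]

/-- A simply laced root system. -/
def IsSLRS {G : Type*} [NormedAddCommGroup G] [InnerProductSpace ℝ G] (Φ : Set G) : Prop :=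
  Φ.Nonempty ∧ Φ.Finite ∧
    ∀ x ∈ Φ, ∀ y ∈ Φ,
      ⟪x, x⟫ = 2 ∧ (∃ m : ℤ, ⟪x, y⟫ = (m : ℝ)) ∧ x - ⟪x, y⟫ • y ∈ Φ

/-- A base of a simply laced root system. -/
def IsBase {G : Type*} [NormedAddCommGroup G] [InnerProductSpace ℝ G] (Φ X : Set G) : Prop :=
  X ⊆ Φ ∧ LinearIndependent ℝ ((↑) : X → G) ∧
    (∀ x ∈ X, ∀ y ∈ X, x ≠ y → ⟪x, y⟫ ≤ 0) ∧
    ∀ v ∈ Φ, v ∈ Submodule.span ℤ X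

section Aux

variable {G : Type*} [NormedAddCommGroup G] [InnerProductSpace ℝ G]

lemma IsSLRS.norm_two {Φ : Set G} (hΦ : IsSLRS Φ) {x : G} (hx : x ∈ Φ) : ⟪x, x⟫ = 2 :=
  (hΦ.2.2 x hx x hx).1

lemma IsSLRS.neg_mem {Φ : Set G} (hΦ : IsSLRS Φ) {x : G} (hx : x ∈ Φ) : -x ∈ Φ := by
  have h := (hΦ.2.2 x hx x hx).2.2
  rw [hΦ.norm_two hx] at h
  have h2 : x - (2 : ℝ) • x = -x := by module
  rwa [h2] at h

lemma mem_of_rep {Φ X : Set G} (hΦ : IsSLRS Φ) (hXΦ : X ⊆ Φ) :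
    ∀ (N : ℕ) (n : X →₀ ℤ), (n.sum fun _ c => c.natAbs) = N →
      ∀ v : G, v = n.sum (fun x c => (c : ℝ) • (x : G)) → ⟪v, v⟫ = 2 → v ∈ Φ := by
  intro N
  induction N using Nat.strong_induction_on with
  | _ N ih =>
  intro n hN v hv hvv
  classical
  have hm : ∀ a b : X, ∃ m : ℤ, ⟪(a : G), (b : G)⟫ = (m : ℝ) :=
    fun a b => (hΦ.2.2 a (hXΦ a.2) b (hXΦ b.2)).2.1
  choose m hm' using hm
  have hsum : ∀ w : G, ⟪v, w⟫ = ∑ i ∈ n.support, (n i : ℝ) * ⟪(i : G), w⟫ := by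
    intro w
    rw [hv, Finsupp.sum, sum_inner]
    exact Finset.sum_congr rfl fun i _ => real_inner_smul_left _ _ _
  set K : X → ℤ := fun j => ∑ i ∈ n.support, n i * m i j with hK
  have hvx : ∀ j : X, ⟪v, (j : G)⟫ = (K j : ℝ) := by
    intro j
    rw [hsum]
    push_cast [hK]
    exact Finset.sum_congr rfl fun i _ => by rw [hm']
  have hxv : ∀ j : X, ⟪(j : G), v⟫ = (K j : ℝ) := by
    intro j
    rw [real_inner_comm]
    exact hvx j
  have htotZ : (∑ j ∈ n.support, n j * K j) = 2 := by
    have hcast : ((∑ j ∈ n.support, n j * K j : ℤ) : ℝ) = 2 := by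
      push_cast
      rw [← hvv, hsum v]
      exact Finset.sum_congr rfl fun j _ => by rw [hxv j]
    exact_mod_cast hcast
  have hex : ∃ j ∈ n.support, 0 < n j * K j := by
    by_contra h
    push_neg at h
    have := Finset.sum_nonpos h
    omega
  obtain ⟨j, hjs, hjpos⟩ := hex
  have hjΦ : (j : G) ∈ Φ := hXΦ j.2
  have hxx : ⟪(j : G), (j : G)⟫ = 2 := hΦ.norm_two hjΦ
  have habs : -2 ≤ K j ∧ K j ≤ 2 := by
    rw [← abs_le]
    have h1 := abs_real_inner_le_norm v (j : G)
    have h2 : ‖v‖ ^ 2 = 2 := by rw [← real_inner_self_eq_norm_sq, hvv]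
    have h3 : ‖(j : G)‖ ^ 2 = 2 := by rw [← real_inner_self_eq_norm_sq, hxx]
    have h4 : ‖v‖ * ‖(j : G)‖ ≤ 2 := by nlinarith [norm_nonneg v, norm_nonneg (j : G)]
    have h5 : |(K j : ℝ)| ≤ 2 := by rw [← hvx j]; linarith
    exact_mod_cast h5
  obtain ⟨habs1, habs2⟩ := habs
  have hkne : K j ≠ 0 := by
    rintro h0
    rw [h0, mul_zero] at hjpos
    exact lt_irrefl 0 hjpos
  by_cases hk2 : K j = 2
  · -- v = j
    have h0 : ⟪v - (j : G), v - (j : G)⟫ = 0 := by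
      rw [inner_sub_sub_self, hvv, hxx, hvx j, hxv j, hk2]
      norm_num
    have hveq : v = (j : G) := by
      rw [inner_self_eq_zero (𝕜 := ℝ), sub_eq_zero] at h0
      exact h0
    exact hveq ▸ hjΦ
  by_cases hkm2 : K j = -2
  · -- v = -j
    have h0 : ⟪v + (j : G), v + (j : G)⟫ = 0 := by
      rw [inner_add_add_self, hvv, hxx, hvx j, hxv j, hkm2]
      norm_num
    have hveq : v = -(j : G) := by
      rw [inner_self_eq_zero (𝕜 := ℝ), add_eq_zero_iff_eq_neg] at h0
      exact h0
    exact hveq ▸ hΦ.neg_mem hjΦ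
  -- now K j = 1 or K j = -1
  have hk1 : K j = 1 ∨ K j = -1 := by omega
  set k : ℤ := K j with hkdef
  set n' : X →₀ ℤ := n - Finsupp.single j k with hn'
  set v' : G := v - (k : ℝ) • (j : G) with hv'def
  have hrep' : v' = n'.sum (fun x c => (c : ℝ) • (x : G)) := by
    rw [hn', Finsupp.sum_sub_index (by intro a b₁ b₂; push_cast; rw [sub_smul]),
      Finsupp.sum_single_index (by norm_num), ← hv]
  have hvv' : ⟪v', v'⟫ = 2 := by
    have hexp := inner_sub_sub_self (𝕜 := ℝ) v ((k : ℝ) • (j : G))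
    simp only [real_inner_smul_left, real_inner_smul_right] at hexp
    rw [hv'def, hexp, hvv, hxx, hvx j, hxv j]
    ring
  have hsupp' : n'.support ⊆ n.support := by
    intro x hx
    rw [Finsupp.mem_support_iff] at hx ⊢
    intro h0
    apply hx
    rw [hn', Finsupp.sub_apply, h0, Finsupp.single_apply]
    by_cases hxj : j = x
    · subst hxj
      exact absurd h0 (Finsupp.mem_support_iff.mp hjs)
    · rw [if_neg hxj]; ring
  have hn'j : n' j = n j - k := by
    rw [hn', Finsupp.sub_apply, Finsupp.single_apply, if_pos rfl]
  have hNlt : (n'.sum fun _ c => c.natAbs) < N := by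
    rw [← hN, Finsupp.sum_of_support_subset n' hsupp' _ (fun _ _ => rfl), Finsupp.sum]
    apply Finset.sum_lt_sum
    · intro i hi
      by_cases hij : i = j
      · subst hij
        rw [hn'j]
        rcases hk1 with h | h <;> (rw [h] at hjpos ⊢) <;> omega
      · have : n' i = n i := by
          rw [hn', Finsupp.sub_apply, Finsupp.single_apply,
            if_neg (fun h => hij h.symm), sub_zero]
        rw [this]
    · refine ⟨j, hjs, ?_⟩
      rw [hn'j]
      rcases hk1 with h | h <;> (rw [h] at hjpos ⊢) <;> omega
  have hv'Φ : v' ∈ Φ := ih _ hNlt n' rfl v' hrep' hvv'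
  have hvj' : ⟪v', (j : G)⟫ = -(k : ℝ) := by
    rw [hv'def, inner_sub_left, real_inner_smul_left, hvx j, hxx]
    ring
  have hclose := (hΦ.2.2 v' hv'Φ (j : G) hjΦ).2.2
  rw [hvj'] at hclose
  have hback : v' - (-(k : ℝ)) • (j : G) = v := by
    rw [hv'def]; module
  rwa [hback] at hclose

lemma mem_of_normsq_two {Φ X : Set G} (hΦ : IsSLRS Φ) (hXΦ : X ⊆ Φ) {v : G}
    (hv : v ∈ Submodule.span ℤ X) (hvv : ⟪v, v⟫ = 2) : v ∈ Φ := by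
  obtain ⟨l, hl⟩ := (Finsupp.mem_span_iff_linearCombination ℤ X v).mp hv
  refine mem_of_rep hΦ hXΦ _ l rfl v ?_ hvv
  rw [← hl, Finsupp.linearCombination_apply]
  exact Finsupp.sum_congr fun i _ => (Int.cast_smul_eq_zsmul ℝ _ _).symm

end Aux

theorem base_bijection_extends_to_isometry {Φ : Set E} {Ψ : Set F} {X : Set E} {Y : Set F}
    (hΦ : IsSLRS Φ) (hΨ : IsSLRS Ψ) (hX : IsBase Φ X) (hY : IsBase Ψ Y)
    (f : E → F) (hbij : Set.BijOn f X Y)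
    (hinner : ∀ x ∈ X, ∀ x' ∈ X, ⟪f x, f x'⟫ = ⟪x, x'⟫) :
    ∃ T : (Submodule.span ℝ X) ≃ₗᵢ[ℝ] (Submodule.span ℝ Y),
      (∀ x (hx : x ∈ X), (T ⟨x, Submodule.subset_span hx⟩ : F) = f x) ∧
      (∀ v (hv : v ∈ Submodule.span ℝ X), (v ∈ Φ ↔ (T ⟨v, hv⟩ : F) ∈ Ψ)) := by
  classical
  obtain ⟨hXΦ, hXli, -, hXspan⟩ := hX
  obtain ⟨hYΨ, hYli, -, hYspan⟩ := hY
  let bX : Module.Basis X ℝ (Submodule.span ℝ X) :=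
    (Module.Basis.span hXli).map (LinearEquiv.ofEq _ _ (by rw [Subtype.range_coe]))
  let bY : Module.Basis Y ℝ (Submodule.span ℝ Y) :=
    (Module.Basis.span hYli).map (LinearEquiv.ofEq _ _ (by rw [Subtype.range_coe]))
  have hbX : ∀ x : X, (bX x : E) = x := by
    intro x
    simp [bX, Module.Basis.span_apply]
  have hbY : ∀ y : Y, (bY y : F) = y := by
    intro y
    simp [bY, Module.Basis.span_apply]
  let e : X ≃ Y := Set.BijOn.equiv f hbij
  have he : ∀ x : X, (e x : F) = f x := fun x => rfl
  let T0 : (Submodule.span ℝ X) ≃ₗ[ℝ] (Submodule.span ℝ Y) := bX.equiv bY e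
  have hT0 : ∀ x : X, (T0 (bX x) : F) = f x := by
    intro x
    show ((bX.equiv bY e) (bX x) : F) = f x
    rw [Module.Basis.equiv_apply, hbY, he]
  have hb_inner : ∀ x x' : X, ⟪T0 (bX x), T0 (bX x')⟫ = ⟪bX x, bX x'⟫ := by
    intro x x'
    rw [Submodule.coe_inner, Submodule.coe_inner, hT0, hT0, hbX, hbX]
    exact hinner x x.2 x' x'.2
  have hinner_all : ∀ u v : Submodule.span ℝ X, ⟪T0 u, T0 v⟫ = ⟪u, v⟫ := by
    have step1 : ∀ (x : X) (v : Submodule.span ℝ X), ⟪T0 (bX x), T0 v⟫ = ⟪bX x, v⟫ := by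
      intro x
      have h := bX.ext (f₁ := (innerₛₗ ℝ (T0 (bX x))).comp T0.toLinearMap)
        (f₂ := innerₛₗ ℝ (bX x)) (fun x' => by simpa using hb_inner x x')
      intro v
      simpa using LinearMap.congr_fun h v
    intro u v
    have h2 := bX.ext (f₁ := (innerₛₗ ℝ (T0 v)).comp T0.toLinearMap) (f₂ := innerₛₗ ℝ v)
      (fun x => by
        have : ⟪T0 v, T0 (bX x)⟫ = ⟪v, bX x⟫ := by
          rw [real_inner_comm, step1 x v, real_inner_comm]
        simpa using this)
    have h3 : ⟪T0 v, T0 u⟫ = ⟪v, u⟫ := by simpa using LinearMap.congr_fun h2 u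
    rw [real_inner_comm, h3, real_inner_comm]
  refine ⟨T0.isometryOfInner hinner_all, ?_, ?_⟩
  · intro x hx
    have hcoe : (⟨x, Submodule.subset_span hx⟩ : Submodule.span ℝ X) = bX ⟨x, hx⟩ :=
      Subtype.ext (hbX ⟨x, hx⟩).symm
    rw [hcoe]
    show (T0 (bX ⟨x, hx⟩) : F) = f x
    exact hT0 ⟨x, hx⟩
  · have hZR : ∀ v : E, v ∈ Submodule.span ℤ X → v ∈ Submodule.span ℝ X := by
      intro v hv
      have hle : Submodule.span ℤ X ≤ (Submodule.span ℝ X).restrictScalars ℤ :=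
        Submodule.span_le.mpr (fun u hu => Submodule.subset_span hu)
      exact hle hv
    have hZR' : ∀ w : F, w ∈ Submodule.span ℤ Y → w ∈ Submodule.span ℝ Y := by
      intro w hw
      have hle : Submodule.span ℤ Y ≤ (Submodule.span ℝ Y).restrictScalars ℤ :=
        Submodule.span_le.mpr (fun u hu => Submodule.subset_span hu)
      exact hle hw
    -- T0 maps the ℤ-lattice into the ℤ-lattice
    have hTlat : ∀ (v : E), v ∈ Submodule.span ℤ X →
        ∀ (hv : v ∈ Submodule.span ℝ X), (T0 ⟨v, hv⟩ : F) ∈ Submodule.span ℤ Y := by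
      intro v hvZ
      induction hvZ using Submodule.span_induction with
      | mem x hx =>
        intro hv
        have hcoe : (⟨x, hv⟩ : Submodule.span ℝ X) = bX ⟨x, hx⟩ :=
          Subtype.ext (hbX ⟨x, hx⟩).symm
        rw [hcoe, hT0]
        exact Submodule.subset_span (hbij.mapsTo hx)
      | zero =>
        intro hv
        have : (⟨0, hv⟩ : Submodule.span ℝ X) = 0 := rfl
        rw [this, map_zero]
        simp
      | add x y hx hy ihx ihy =>
        intro hv
        have hxR := hZR x hx
        have hyR := hZR y hy
        have : (⟨x + y, hv⟩ : Submodule.span ℝ X) = ⟨x, hxR⟩ + ⟨y, hyR⟩ := rfl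
        rw [this, map_add]
        exact Submodule.add_mem _ (ihx hxR) (ihy hyR)
      | smul a x hx ihx =>
        intro hv
        have hxR := hZR x hx
        have : (⟨a • x, hv⟩ : Submodule.span ℝ X) = a • (⟨x, hxR⟩ : Submodule.span ℝ X) := rfl
        rw [this, map_zsmul]
        have := Submodule.smul_mem (Submodule.span ℤ Y) a (ihx hxR)
        simpa using this
    -- T0.symm maps the ℤ-lattice into the ℤ-lattice
    have hTlat' : ∀ (w : F), w ∈ Submodule.span ℤ Y →
        ∀ (hw : w ∈ Submodule.span ℝ Y), (T0.symm ⟨w, hw⟩ : E) ∈ Submodule.span ℤ X := by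
      intro w hwZ
      induction hwZ using Submodule.span_induction with
      | mem y hy =>
        intro hw
        obtain ⟨x, hx, hfx⟩ := hbij.surjOn hy
        have hx' : (⟨y, hw⟩ : Submodule.span ℝ Y) = T0 (bX ⟨x, hx⟩) :=
          Subtype.ext (by rw [hT0]; exact hfx.symm)
        rw [hx', LinearEquiv.symm_apply_apply]
        have : ((bX ⟨x, hx⟩ : Submodule.span ℝ X) : E) = x := hbX ⟨x, hx⟩
        rw [this]
        exact Submodule.subset_span hx
      | zero =>
        intro hw
        have : (⟨0, hw⟩ : Submodule.span ℝ Y) = 0 := rfl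
        rw [this, map_zero]
        simp
      | add x y hx hy ihx ihy =>
        intro hw
        have hxR := hZR' x hx
        have hyR := hZR' y hy
        have : (⟨x + y, hw⟩ : Submodule.span ℝ Y) = ⟨x, hxR⟩ + ⟨y, hyR⟩ := rfl
        rw [this, map_add]
        exact Submodule.add_mem _ (ihx hxR) (ihy hyR)
      | smul a x hx ihx =>
        intro hw
        have hxR := hZR' x hx
        have : (⟨a • x, hw⟩ : Submodule.span ℝ Y) = a • (⟨x, hxR⟩ : Submodule.span ℝ Y) := rfl
        rw [this, map_zsmul]
        have := Submodule.smul_mem (Submodule.span ℤ X) a (ihx hxR)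
        simpa using this
    intro v hv
    show v ∈ Φ ↔ (T0 ⟨v, hv⟩ : F) ∈ Ψ
    have hTnorm : ⟪(T0 ⟨v, hv⟩ : F), (T0 ⟨v, hv⟩ : F)⟫ = ⟪v, v⟫ := by
      have := hinner_all ⟨v, hv⟩ ⟨v, hv⟩
      rwa [Submodule.coe_inner, Submodule.coe_inner] at this
    constructor
    · intro hvΦ
      refine mem_of_normsq_two hΨ hYΨ (hTlat v (hXspan v hvΦ) hv) ?_
      rw [hTnorm]
      exact hΦ.norm_two hvΦ
    · intro hTΨ
      have hwZ : (T0 ⟨v, hv⟩ : F) ∈ Submodule.span ℤ Y := hYspan _ hTΨ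
      have hvZ := hTlat' _ hwZ (T0 ⟨v, hv⟩).2
      have hcoe : (⟨(T0 ⟨v, hv⟩ : F), (T0 ⟨v, hv⟩).2⟩ : Submodule.span ℝ Y) = T0 ⟨v, hv⟩ := rfl
      rw [hcoe, LinearEquiv.symm_apply_apply] at hvZ
      refine mem_of_normsq_two hΦ hXΦ hvZ ?_
      rw [← hTnorm]
      exact hΨ.norm_two hTΨ
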